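/- Let a, b ≥ 2 be integers with gcd(a, b) = 1 and gcd(a−1, b−1) = 1, and suppose that a−1 or b−1 is a power of 2 (i.e. a = 2 or a = 2^ℓ + 1 for some ℓ ≥ 1, or the same for b). Then for every nonzero integer Q there exist integers m, n ≥ 1 with gcd(a^m − b^n, Q) = 1. In particular, no nonzero integer Q satisfies gcd(a^m − b^n, Q) > 1 for all m, n ≥ 1. -/

import Mathlib

private lemma key_coprime (a b : ℤ) (ha : 2 ≤ a) (hb : 2 ≤ b)
    (hab : Int.gcd a b = 1) (hab1 : Int.gcd (a - 1) (b - 1) = 1)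
    (ℓ : ℕ) (hℓ : a - 1 = 2 ^ ℓ) (Q : ℤ) (hQ : Q ≠ 0) :
    Int.gcd (a - b ^ Q.natAbs.totient) Q = 1 := by
  set n := Q.natAbs.totient with hn
  by_contra h
  obtain ⟨p, pp, hpd⟩ := Nat.exists_prime_and_dvd h
  haveI : Fact p.Prime := ⟨pp⟩
  have hpx : (p : ℤ) ∣ a - b ^ n := by
    have : p ∣ (a - b ^ n).natAbs := hpd.trans (Nat.gcd_dvd_left _ _)
    exact Int.natAbs_dvd.mp (Int.natCast_dvd_natCast.mpr this |>.trans (Int.natAbs_dvd.mpr dvd_rfl))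
  have hpQ : (p : ℤ) ∣ Q := by
    have : p ∣ Q.natAbs := hpd.trans (Nat.gcd_dvd_right _ _)
    exact Int.natAbs_dvd.mp (Int.natCast_dvd_natCast.mpr this |>.trans (Int.natAbs_dvd.mpr dvd_rfl))
  have hn1 : 1 ≤ n := Nat.totient_pos.mpr (Int.natAbs_pos.mpr hQ)
  by_cases hpb : (p : ℤ) ∣ b
  · -- then p ∣ a, contradicting gcd(a,b)=1
    have hpa : (p : ℤ) ∣ a := by
      have : (p : ℤ) ∣ b ^ n := dvd_pow hpb (by omega)
      have := dvd_add hpx this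
      simpa using this
    have : (p : ℤ) ∣ Int.gcd a b := Int.dvd_coe_gcd hpa hpb
    rw [hab] at this
    exact pp.one_lt.ne' (by exact_mod_cast Int.eq_one_of_dvd_one (by positivity) this)
  · -- Fermat: p ∣ b^n - 1
    have hbne : (b : ZMod p) ≠ 0 := fun h0 =>
      hpb ((ZMod.intCast_zmod_eq_zero_iff_dvd b p).mp h0)
    have hdvd : (p - 1) ∣ n := by
      have h1 : p ∣ Q.natAbs := Int.natCast_dvd_natCast.mp (by
        exact_mod_cast Int.natAbs_dvd_natAbs.mpr hpQ)
      have := Nat.totient_dvd_of_dvd h1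
      rwa [Nat.totient_prime pp] at this
    obtain ⟨k, hk⟩ := hdvd
    have hbn : ((b : ZMod p)) ^ n = 1 := by
      rw [hk, pow_mul, ZMod.pow_card_sub_one_eq_one hbne, one_pow]
    have hpbn : (p : ℤ) ∣ b ^ n - 1 := by
      apply (ZMod.intCast_zmod_eq_zero_iff_dvd _ p).mp
      push_cast
      rw [hbn]; ring
    have hpa1 : (p : ℤ) ∣ a - 1 := by
      have := dvd_add hpx hpbn
      simpa using this
    have hp2 : p = 2 := by
      rw [hℓ] at hpa1
      have : (p : ℤ) ∣ 2 := (Nat.prime_iff_prime_int.mp pp).dvd_of_dvd_pow hpa1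
      have := Int.le_of_dvd (by norm_num) this
      have := pp.two_le
      omega
    subst hp2
    -- 2 ∣ b^n - 1 forces b odd, then 2 ∣ b - 1 and 2 ∣ a - 1, contradiction
    have hb2 : (2 : ℤ) ∣ b - 1 := by
      rcases Int.even_or_odd b with he | ho
      · exfalso
        obtain ⟨c, hc⟩ := he
        have : ¬ (2:ℤ) ∣ b ^ n - 1 := by
          intro hdd
          have h2b : (2:ℤ) ∣ b ^ n := by
            rw [hc]
            exact dvd_pow ⟨c, by ring⟩ (by omega)
          have h1 : (2:ℤ) ∣ 1 := (dvd_sub_right h2b).mp hdd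
          norm_num at h1
        exact this (by exact_mod_cast hpbn)
      · obtain ⟨c, hc⟩ := ho; exact ⟨c, by omega⟩
    have : (2 : ℤ) ∣ Int.gcd (a - 1) (b - 1) :=
      Int.dvd_coe_gcd (by exact_mod_cast hpa1) hb2
    rw [hab1] at this
    norm_num at this

/-- If `a, b ≥ 2` with `gcd(a,b) = 1` and `gcd(a-1,b-1) = 1`, and `a-1` or `b-1`
is a power of `2` (i.e. `a = 2` or `a = 2^ℓ + 1`, or the same for `b`), then for
every nonzero integer `Q` there are `m, n ≥ 1` with `gcd(a^m - b^n, Q) = 1`;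
in particular no nonzero `Q` satisfies `gcd(a^m - b^n, Q) > 1` for all `m, n ≥ 1`. -/
theorem no_covering_in_exceptional_cases
    (a b : ℤ) (ha : 2 ≤ a) (hb : 2 ≤ b)
    (hab : Int.gcd a b = 1) (hab1 : Int.gcd (a - 1) (b - 1) = 1)
    (hpow : (∃ ℓ : ℕ, a - 1 = 2 ^ ℓ) ∨ (∃ ℓ : ℕ, b - 1 = 2 ^ ℓ)) :
    (∀ Q : ℤ, Q ≠ 0 → ∃ m n : ℕ, 1 ≤ m ∧ 1 ≤ n ∧ Int.gcd (a ^ m - b ^ n) Q = 1) ∧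
    ¬ ∃ Q : ℤ, Q ≠ 0 ∧ ∀ m n : ℕ, 1 ≤ m → 1 ≤ n → 1 < Int.gcd (a ^ m - b ^ n) Q := by
  have main : ∀ Q : ℤ, Q ≠ 0 → ∃ m n : ℕ, 1 ≤ m ∧ 1 ≤ n ∧
      Int.gcd (a ^ m - b ^ n) Q = 1 := by
    intro Q hQ
    have hnpos : 1 ≤ Q.natAbs.totient := Nat.totient_pos.mpr (Int.natAbs_pos.mpr hQ)
    rcases hpow with ⟨ℓ, hℓ⟩ | ⟨ℓ, hℓ⟩
    · refine ⟨1, Q.natAbs.totient, le_refl 1, hnpos, ?_⟩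
      have := key_coprime a b ha hb hab hab1 ℓ hℓ Q hQ
      simpa using this
    · refine ⟨Q.natAbs.totient, 1, hnpos, le_refl 1, ?_⟩
      have := key_coprime b a hb ha (by rw [Int.gcd_comm]; exact hab)
        (by rw [Int.gcd_comm]; exact hab1) ℓ hℓ Q hQ
      have heq : Int.gcd (a ^ Q.natAbs.totient - b ^ 1) Q
          = Int.gcd (b - a ^ Q.natAbs.totient) Q := by
        rw [pow_one, ← Int.neg_gcd, neg_sub]
      rw [heq]
      exact this
  refine ⟨main, ?_⟩
  rintro ⟨Q, hQ, hall⟩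
  obtain ⟨m, n, hm, hn, hg⟩ := main Q hQ
  have := hall m n hm hn
  omega
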